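/- For any integers n ≥ g ≥ 1, Δ(R(g,n)/n) ≤ g/n. -/

import Mathlib

open MeasureTheory

/-- A set `C ⊆ ℝ` is symmetric if there is a center `c` with `c + x ∈ C ↔ c - x ∈ C`. -/
def IsSymmetricSet (C : Set ℝ) : Prop := ∃ c : ℝ, ∀ x : ℝ, c + x ∈ C ↔ c - x ∈ C

/-- `DD A` is the supremum of measures of measurable symmetric subsets of `A`. -/
noncomputable def DD (A : Set ℝ) : ℝ :=
  sSup {m : ℝ | ∃ C : Set ℝ, C ⊆ A ∧ MeasurableSet C ∧ IsSymmetricSet C ∧ m = (volume C).toReal}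

/-- `Δ ε` is the infimum of `DD A` over measurable `A ⊆ [0,1)` with measure `ε`. -/
noncomputable def Δ (ε : ℝ) : ℝ :=
  sInf {d : ℝ | ∃ A : Set ℝ, A ⊆ Set.Ico (0:ℝ) 1 ∧ MeasurableSet A ∧
    volume A = ENNReal.ofReal ε ∧ d = DD A}

/-- `S` is a B*[g] set: for every `m` there are at most `g` ordered pairs in `S × S`
summing to `m`. -/
def IsBStar (g : ℕ) (S : Finset ℤ) : Prop :=
  ∀ m : ℤ, ((S ×ˢ S).filter (fun p => p.1 + p.2 = m)).card ≤ g

/-- `R g n` is the largest cardinality of a B*[g] set contained in `{1, …, n}`. -/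
noncomputable def R (g n : ℕ) : ℕ :=
  sSup {k : ℕ | ∃ S : Finset ℤ, S ⊆ Finset.Icc 1 (n : ℤ) ∧ IsBStar g S ∧ S.card = k}

lemma DD_nonneg (A : Set ℝ) : 0 ≤ DD A := by
  apply Real.sSup_nonneg
  rintro m ⟨C, -, -, -, rfl⟩
  exact ENNReal.toReal_nonneg

lemma exists_R_set (g n : ℕ) :
    ∃ S : Finset ℤ, S ⊆ Finset.Icc 1 (n : ℤ) ∧ IsBStar g S ∧ S.card = R g n := by
  have h0 : (0:ℕ) ∈ {k : ℕ | ∃ S : Finset ℤ, S ⊆ Finset.Icc 1 (n : ℤ) ∧ IsBStar g S ∧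
      S.card = k} := ⟨∅, by simp, fun m => by simp, rfl⟩
  have hbdd : BddAbove {k : ℕ | ∃ S : Finset ℤ, S ⊆ Finset.Icc 1 (n : ℤ) ∧ IsBStar g S ∧
      S.card = k} := by
    refine ⟨(Finset.Icc 1 (n:ℤ)).card, ?_⟩
    rintro k ⟨S, hS, -, rfl⟩
    exact Finset.card_le_card hS
  exact Nat.sSup_mem ⟨0, h0⟩ hbdd

/-- The key measure bound for symmetric subsets of a union of aligned intervals. -/
lemma sym_bound (g n : ℕ) (hn : 1 ≤ n) (S : Finset ℤ) (hB : IsBStar g S)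
    (C : Set ℝ) (hC : C ⊆ ⋃ s ∈ S, Set.Ico (((s:ℝ)-1)/n) ((s:ℝ)/n))
    (hsym : IsSymmetricSet C) :
    volume C ≤ ENNReal.ofReal ((g:ℝ) / n) := by
  have hn0 : (0:ℝ) < n := by exact_mod_cast hn
  obtain ⟨c, hc⟩ := hsym
  set u : ℝ := 2 * c with hu
  have hrefl : ∀ x ∈ C, u - x ∈ C := by
    intro x hx
    have h1 : c + (x - c) = x := by ring
    have h2 : c - (x - c) = u - x := by rw [hu]; ring
    have := (hc (x - c)).mp (by rw [h1]; exact hx)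
    rwa [h2] at this
  set M : ℤ := ⌊u * n⌋ with hM
  set a : ℝ := ((M:ℝ) + 1) / n - u with ha
  set b : ℝ := u - (M:ℝ) / n with hb
  have hMle : (M:ℝ) ≤ u * n := Int.floor_le _
  have hMlt : u * n < (M:ℝ) + 1 := by exact_mod_cast Int.lt_floor_add_one (u * n)
  have ha0 : 0 ≤ a := by
    rw [ha, sub_nonneg, le_div_iff₀ hn0]
    linarith
  have hb0 : 0 ≤ b := by
    rw [hb, sub_nonneg, div_le_iff₀ hn0]
    linarith
  have hab : a + b = 1 / n := by
    rw [ha, hb]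
    field_simp
    ring
  set P1 : Finset (ℤ × ℤ) := (S ×ˢ S).filter (fun p => p.1 + p.2 = M + 1) with hP1
  set P2 : Finset (ℤ × ℤ) := (S ×ˢ S).filter (fun p => p.1 + p.2 = M + 2) with hP2
  set J : ℤ × ℤ → Set ℝ := fun p =>
    Set.Ico (((p.1:ℝ)-1)/n) ((p.1:ℝ)/n) ∩ {x : ℝ | u - x ∈ Set.Ico (((p.2:ℝ)-1)/n) ((p.2:ℝ)/n)}
    with hJ
  have hcover : C ⊆ ⋃ p ∈ P1 ∪ P2, J p := by
    intro x hx
    obtain ⟨s, hsS, hxs⟩ := Set.mem_iUnion₂.mp (hC hx)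
    obtain ⟨t, htS, hxt⟩ := Set.mem_iUnion₂.mp (hC (hrefl x hx))
    have h1 : ((s:ℝ) - 1)/n ≤ x := hxs.1
    have h2 : x < (s:ℝ)/n := hxs.2
    have h3 : ((t:ℝ) - 1)/n ≤ u - x := hxt.1
    have h4 : u - x < (t:ℝ)/n := hxt.2
    have hlow : (s:ℝ) + t - 2 ≤ u * n := by
      have := add_le_add h1 h3
      have h5 : ((s:ℝ) - 1)/n + ((t:ℝ) - 1)/n = ((s:ℝ) + t - 2)/n := by ring
      rw [h5] at this
      calc (s:ℝ) + t - 2 = (((s:ℝ) + t - 2)/n) * n := by field_simp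
        _ ≤ u * n := by nlinarith
    have hhigh : u * n < (s:ℝ) + t := by
      have hun : u < ((s:ℝ) + t)/n := by
        have := add_lt_add_of_lt_of_le h2 (le_of_lt h4)
        have h5 : (s:ℝ)/n + (t:ℝ)/n = ((s:ℝ) + t)/n := by ring
        linarith
      exact (lt_div_iff₀ hn0).mp hun
    have hfl1 : s + t - 2 ≤ M := by
      rw [hM]
      apply Int.le_floor.mpr
      push_cast
      linarith
    have hfl2 : M < s + t := by
      have : (M:ℝ) < (s:ℝ) + t := lt_of_le_of_lt hMle hhigh
      exact_mod_cast this
    have hst : s + t = M + 1 ∨ s + t = M + 2 := by omega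
    refine Set.mem_iUnion₂.mpr ⟨(s, t), ?_, ?_⟩
    · rcases hst with h | h
      · exact Finset.mem_union_left _ (Finset.mem_filter.mpr ⟨Finset.mem_product.mpr ⟨hsS, htS⟩, h⟩)
      · exact Finset.mem_union_right _ (Finset.mem_filter.mpr ⟨Finset.mem_product.mpr ⟨hsS, htS⟩, h⟩)
    · exact ⟨hxs, hxt⟩
  have hvol1 : ∀ p ∈ P1, volume (J p) ≤ ENNReal.ofReal a := by
    rintro ⟨s, t⟩ hp
    have hst : s + t = M + 1 := (Finset.mem_filter.mp hp).2
    have hsub : J (s, t) ⊆ Set.Ioo (u - (t:ℝ)/n) ((s:ℝ)/n) := by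
      rintro x ⟨hxs, hxt⟩
      exact ⟨by linarith [hxt.2], hxs.2⟩
    calc volume (J (s,t)) ≤ volume (Set.Ioo (u - (t:ℝ)/n) ((s:ℝ)/n)) := measure_mono hsub
      _ = ENNReal.ofReal ((s:ℝ)/n - (u - (t:ℝ)/n)) := Real.volume_Ioo
      _ = ENNReal.ofReal a := by
          congr 1
          have : (s:ℝ) + t = (M:ℝ) + 1 := by exact_mod_cast hst
          rw [ha]
          field_simp
          linarith [this]
  have hvol2 : ∀ p ∈ P2, volume (J p) ≤ ENNReal.ofReal b := by
    rintro ⟨s, t⟩ hp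
    have hst : s + t = M + 2 := (Finset.mem_filter.mp hp).2
    have hsub : J (s, t) ⊆ Set.Icc (((s:ℝ)-1)/n) (u - ((t:ℝ)-1)/n) := by
      rintro x ⟨hxs, hxt⟩
      exact ⟨hxs.1, by linarith [hxt.1]⟩
    calc volume (J (s,t)) ≤ volume (Set.Icc (((s:ℝ)-1)/n) (u - ((t:ℝ)-1)/n)) :=
          measure_mono hsub
      _ = ENNReal.ofReal ((u - ((t:ℝ)-1)/n) - ((s:ℝ)-1)/n) := Real.volume_Icc
      _ = ENNReal.ofReal b := by
          congr 1
          have : (s:ℝ) + t = (M:ℝ) + 2 := by exact_mod_cast hst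
          rw [hb]
          field_simp
          linarith [this]
  have hdisj : Disjoint P1 P2 := by
    rw [Finset.disjoint_left]
    rintro p hp1 hp2
    have h1 := (Finset.mem_filter.mp hp1).2
    have h2 := (Finset.mem_filter.mp hp2).2
    omega
  have hcard1 : P1.card ≤ g := hB (M + 1)
  have hcard2 : P2.card ≤ g := hB (M + 2)
  calc volume C ≤ volume (⋃ p ∈ P1 ∪ P2, J p) := measure_mono hcover
    _ ≤ ∑ p ∈ P1 ∪ P2, volume (J p) := measure_biUnion_finset_le _ _
    _ = ∑ p ∈ P1, volume (J p) + ∑ p ∈ P2, volume (J p) := Finset.sum_union hdisj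
    _ ≤ ∑ _p ∈ P1, ENNReal.ofReal a + ∑ _p ∈ P2, ENNReal.ofReal b :=
        add_le_add (Finset.sum_le_sum hvol1) (Finset.sum_le_sum hvol2)
    _ = P1.card • ENNReal.ofReal a + P2.card • ENNReal.ofReal b := by
        rw [Finset.sum_const, Finset.sum_const]
    _ ≤ g • ENNReal.ofReal a + g • ENNReal.ofReal b :=
        add_le_add (nsmul_le_nsmul_left (by simp) hcard1)
          (nsmul_le_nsmul_left (by simp) hcard2)
    _ = ENNReal.ofReal ((g:ℝ) * a) + ENNReal.ofReal ((g:ℝ) * b) := by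
        rw [nsmul_eq_mul, nsmul_eq_mul, ← ENNReal.ofReal_natCast g,
          ← ENNReal.ofReal_mul (by positivity), ← ENNReal.ofReal_mul (by positivity)]
    _ = ENNReal.ofReal ((g:ℝ) * a + (g:ℝ) * b) := by
        rw [ENNReal.ofReal_add (by positivity) (by positivity)]
    _ = ENNReal.ofReal ((g:ℝ) / n) := by
        congr 1
        rw [← mul_add, hab]
        ring

theorem delta_from_R (g n : ℕ) (hg : 1 ≤ g) (hgn : g ≤ n) :
    Δ ((R g n : ℝ) / n) ≤ (g : ℝ) / n := by
  have hn : 1 ≤ n := le_trans hg hgn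
  have hn0 : (0:ℝ) < n := by exact_mod_cast hn
  obtain ⟨S, hSsub, hSB, hScard⟩ := exists_R_set g n
  set A : Set ℝ := ⋃ s ∈ S, Set.Ico (((s:ℝ)-1)/n) ((s:ℝ)/n) with hA
  have hAsub : A ⊆ Set.Ico (0:ℝ) 1 := by
    intro x hx
    obtain ⟨s, hsS, hxs⟩ := Set.mem_iUnion₂.mp hx
    have hs := Finset.mem_Icc.mp (hSsub hsS)
    have h1 : (1:ℝ) ≤ (s:ℝ) := by exact_mod_cast hs.1
    have h2 : (s:ℝ) ≤ n := by exact_mod_cast hs.2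
    constructor
    · calc (0:ℝ) ≤ ((s:ℝ)-1)/n := div_nonneg (by linarith) hn0.le
        _ ≤ x := hxs.1
    · calc x < (s:ℝ)/n := hxs.2
        _ ≤ 1 := by rw [div_le_one hn0]; exact h2
  have hAmeas : MeasurableSet A := by
    exact MeasurableSet.biUnion S.countable_toSet (fun _ _ => measurableSet_Ico)
  have hAvol : volume A = ENNReal.ofReal ((R g n : ℝ) / n) := by
    rw [hA, measure_biUnion_finset ?_ (fun _ _ => measurableSet_Ico)]
    · have heach : ∀ s ∈ S, volume (Set.Ico (((s:ℝ)-1)/n) ((s:ℝ)/n))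
          = ENNReal.ofReal (1/n) := by
        intro s _
        rw [Real.volume_Ico]
        congr 1
        field_simp
        ring
      rw [Finset.sum_congr rfl heach, Finset.sum_const, hScard, nsmul_eq_mul,
        ← ENNReal.ofReal_natCast (R g n), ← ENNReal.ofReal_mul (by positivity)]
      congr 1
      ring
    · intro s hs t ht hst
      have hst' : (s:ℤ) ≠ t := hst
      refine Set.Ico_disjoint_Ico.mpr ?_
      rcases lt_or_gt_of_ne hst' with h | h
      · have h1 : (s:ℝ) + 1 ≤ (t:ℝ) := by exact_mod_cast (by omega : s + 1 ≤ t)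
        have hd : (s:ℝ)/n ≤ ((t:ℝ)-1)/n := div_le_div_of_nonneg_right (by linarith) hn0.le
        exact le_trans (min_le_left _ _) (le_trans hd (le_max_right _ _))
      · have h1 : (t:ℝ) + 1 ≤ (s:ℝ) := by exact_mod_cast (by omega : t + 1 ≤ s)
        have hd : (t:ℝ)/n ≤ ((s:ℝ)-1)/n := div_le_div_of_nonneg_right (by linarith) hn0.le
        exact le_trans (min_le_right _ _) (le_trans hd (le_max_left _ _))
  have hDD : DD A ≤ (g:ℝ)/n := by
    apply Real.sSup_le
    · rintro m ⟨C, hCA, hCm, hCs, rfl⟩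
      have hle := sym_bound g n hn S hSB C hCA hCs
      exact ENNReal.toReal_le_of_le_ofReal (by positivity) hle
    · positivity
  have hbdd : BddBelow {d : ℝ | ∃ A : Set ℝ, A ⊆ Set.Ico (0:ℝ) 1 ∧ MeasurableSet A ∧
      volume A = ENNReal.ofReal ((R g n : ℝ) / n) ∧ d = DD A} := by
    refine ⟨0, ?_⟩
    rintro d ⟨A', -, -, -, rfl⟩
    exact DD_nonneg A'
  have hmem : DD A ∈ {d : ℝ | ∃ A : Set ℝ, A ⊆ Set.Ico (0:ℝ) 1 ∧ MeasurableSet A ∧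
      volume A = ENNReal.ofReal ((R g n : ℝ) / n) ∧ d = DD A} := ⟨A, hAsub, hAmeas, hAvol, rfl⟩
  exact le_trans (csInf_le hbdd hmem) hDD
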